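/- For the bit-vector testing problem f with parameters n, m ≥ 1: if A ⊆ X and B ⊆ Y are nonempty sets with f(x,y) = 1 for all (x,y) ∈ A × B, then |A| ≤ (n − log₂|B|)^m. -/

import Mathlib

/-- `f` has `(s,w,t)`-certificates: there is a code `T : Y → Σ^s` with alphabet
`Σ = {0,1}^w` such that for every query `x` and database `y` some set `P` of at
most `t` cells determines the answer `f (x, y)`. -/
def HasCertificates {X Y Z : Type*} (f : X × Y → Z) (s w t : ℕ) : Prop :=
  ∃ T : Y → Fin s → (Fin w → Bool),
    ∀ x : X, ∀ y : Y, ∃ P : Finset (Fin s), P.card ≤ t ∧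
      ∀ y' : Y, (∀ i ∈ P, T y' i = T y i) → f (x, y') = f (x, y)

/-- The bit-vector testing problem with parameters `n, m`: a database is a bit-vector
`y ∈ {0,1}^n`, a query is a pair `(u, v)` of an `m`-tuple of positions and a prediction,
and the answer is `1` iff `y (u j) = v j` for every `j`. -/
def bvTest (n m : ℕ) : ((Fin m → Fin n) × (Fin m → Bool)) × (Fin n → Bool) → Fin 2 :=
  fun p => if ∀ j : Fin m, p.2 (p.1.1 j) = p.1.2 j then 1 else 0

/-- Every monochromatic 1-rectangle `A × B` of the bit-vector testing problem satisfies
`|A| ≤ (n − log₂ |B|)^m`. -/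
theorem bvTest_rectangle_bound (n m : ℕ) (hn : 1 ≤ n) (hm : 1 ≤ m)
    (A : Finset ((Fin m → Fin n) × (Fin m → Bool))) (B : Finset (Fin n → Bool))
    (hA : A.Nonempty) (hB : B.Nonempty)
    (hone : ∀ x ∈ A, ∀ y ∈ B, bvTest n m (x, y) = 1) :
    (A.card : ℝ) ≤ ((n : ℝ) - Real.logb 2 (B.card)) ^ m := by
  classical
  obtain ⟨y₀, hy₀⟩ := hB
  set F : Finset (Fin n) := Finset.univ.filter (fun i => ∀ y ∈ B, y i = y₀ i) with hF
  have hans : ∀ x ∈ A, ∀ y ∈ B, ∀ j : Fin m, y (x.1 j) = x.2 j := by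
    intro x hx y hy j
    have h1 := hone x hx y hy
    simp only [bvTest] at h1
    by_contra h
    rw [if_neg (fun hall => h (hall j))] at h1
    exact absurd h1 (by decide)
  -- each queried position is in F
  have hpos : ∀ x ∈ A, ∀ j : Fin m, x.1 j ∈ F := by
    intro x hx j
    simp only [hF, Finset.mem_filter, Finset.mem_univ, true_and]
    intro y hy
    rw [hans x hx y hy j, hans x hx y₀ hy₀ j]
  -- |A| ≤ |F|^m
  have hAcard : A.card ≤ F.card ^ m := by
    have hle := Finset.card_le_card_of_injOn (fun x : (Fin m → Fin n) × (Fin m → Bool) => x.1)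
      (fun x hx => by
        simp only [Finset.mem_coe, Fintype.mem_piFinset]
        intro j
        exact hpos x hx j) (t := Fintype.piFinset (fun _ : Fin m => F))
      (by
        intro x hx x' hx' h
        replace h : x.1 = x'.1 := h
        have hv : x.2 = x'.2 := by
          funext j
          rw [← hans x hx y₀ hy₀ j, ← hans x' hx' y₀ hy₀ j, h]
        exact Prod.ext h hv)
    calc A.card ≤ (Fintype.piFinset (fun _ : Fin m => F)).card := hle
      _ = F.card ^ m := by simp [Fintype.card_piFinset]
  -- |B| ≤ 2^(n - |F|)
  have hFn : F.card ≤ n := by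
    have := Finset.card_le_univ F
    simpa using this
  have hBcard : B.card ≤ 2 ^ (n - F.card) := by
    have hinj : Function.Injective (fun (y : ↥B) (i : ↥(Fᶜ : Finset (Fin n))) => (y : Fin n → Bool) i) := by
      intro y y' h
      ext i
      by_cases hi : i ∈ F
      · simp only [hF, Finset.mem_filter, Finset.mem_univ, true_and] at hi
        rw [hi y y.2, hi y' y'.2]
      · exact congrFun h ⟨i, by simpa using hi⟩
    have := Fintype.card_le_of_injective _ hinj
    simpa [Finset.card_compl] using this
  -- log bound
  have hB1 : (1 : ℝ) ≤ (B.card : ℝ) := by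
    exact_mod_cast Finset.card_pos.mpr ⟨y₀, hy₀⟩
  have hlog : Real.logb 2 (B.card) ≤ ((n : ℝ) - F.card) := by
    have h2 : (B.card : ℝ) ≤ (2 : ℝ) ^ (n - F.card) := by
      exact_mod_cast hBcard
    have hlb : Real.logb 2 (B.card) ≤ Real.logb 2 ((2:ℝ) ^ (n - F.card)) :=
      Real.logb_le_logb_of_le (by norm_num) (by linarith) h2
    rw [Real.logb_pow, Real.logb_self_eq_one (by norm_num)] at hlb
    calc Real.logb 2 (B.card) ≤ ((n - F.card : ℕ) : ℝ) * 1 := hlb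
      _ = ((n - F.card : ℕ) : ℝ) := by ring
      _ ≤ (n : ℝ) - F.card := by
          rw [Nat.cast_sub hFn]
  have hFle : (F.card : ℝ) ≤ (n : ℝ) - Real.logb 2 (B.card) := by linarith
  calc (A.card : ℝ) ≤ ((F.card : ℝ)) ^ m := by exact_mod_cast hAcard
    _ ≤ ((n : ℝ) - Real.logb 2 (B.card)) ^ m :=
        pow_le_pow_left₀ (by positivity) hFle m
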